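/- Let p0 ∈ [1,∞) and let X̂_{p0} be the first generation space with τ_n = ⌊(n+1)^{p0}/n⌋ and F(n,i) = n. Then the non-centered maximal operator M is of strong type (p0,p0): ‖Mf‖_{p0}^{p0} ≤ (3 + 2^{p0+1}) ‖f‖_{p0}^{p0} for every f ∈ ℓ^{p0}(X_τ, μ). -/

import Mathlib

open scoped ENNReal Classical
open Filter Set

/-- The point set of a first generation space: roots `x_n` (`Sum.inl n`) and
leaves `x_{n,i}` (`Sum.inr ⟨n, i⟩`, `i` among `τ n` leaves of branch `n`). -/
abbrev XPt (τ : ℕ → ℕ) := ℕ ⊕ (Σ n : ℕ, Fin (τ n))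

namespace FirstGen

/-- The root `x_n`. -/
def root (τ : ℕ → ℕ) (n : ℕ) : XPt τ := Sum.inl n

/-- The leaf `x_{n,i}`. -/
def leaf (τ : ℕ → ℕ) (n : ℕ) (i : Fin (τ n)) : XPt τ := Sum.inr ⟨n, i⟩

/-- The branch `S_n = {x_n, x_{n,1}, …, x_{n,τ_n}}`. -/
def branch (τ : ℕ → ℕ) (n : ℕ) : Set (XPt τ) :=
  {x | x = root τ n ∨ ∃ i, x = leaf τ n i}

/-- The two-point set `{x_n, x_{n,i}}`. -/
def pairB (τ : ℕ → ℕ) (n : ℕ) (i : Fin (τ n)) : Set (XPt τ) :=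
  {root τ n, leaf τ n i}

/-- The collection of all open balls of `X_τ`: singletons, pairs `{x_n, x_{n,i}}`,
branches `S_n` and the whole space. -/
def balls (τ : ℕ → ℕ) : Set (Set (XPt τ)) :=
  {B | (∃ x, B = {x}) ∨ (∃ n i, B = pairB τ n i) ∨ (∃ n, B = branch τ n) ∨ B = Set.univ}

/-- The ball `B(x, 3/2)` centered at `x`. -/
def cball (τ : ℕ → ℕ) : XPt τ → Set (XPt τ)
  | Sum.inl n => branch τ n
  | Sum.inr ⟨n, i⟩ => pairB τ n i

/-- The weight (measure of the singleton): `μ({x_n}) = d n`,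
`μ({x_{n,i}}) = d n * F n i`. -/
noncomputable def weight (τ : ℕ → ℕ) (d : ℕ → ℝ≥0∞)
    (F : (n : ℕ) → Fin (τ n) → ℝ≥0∞) : XPt τ → ℝ≥0∞
  | Sum.inl n => d n
  | Sum.inr ⟨n, i⟩ => d n * F n i

/-- Measure of a set. -/
noncomputable def mass {τ : ℕ → ℕ} (w : XPt τ → ℝ≥0∞) (s : Set (XPt τ)) : ℝ≥0∞ :=
  ∑' x : s, w x.1

/-- Average `A_s(f)` of `f` over `s`. -/
noncomputable def avg {τ : ℕ → ℕ} (w f : XPt τ → ℝ≥0∞) (s : Set (XPt τ)) : ℝ≥0∞ :=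
  (∑' x : s, f x.1 * w x.1) / mass w s

/-- The centered Hardy–Littlewood maximal operator of `X_τ` (the three balls
centered at `x` are `{x}`, `cball τ x` and the whole space). -/
noncomputable def Mc {τ : ℕ → ℕ} (w f : XPt τ → ℝ≥0∞) (x : XPt τ) : ℝ≥0∞ :=
  avg w f {x} ⊔ avg w f (cball τ x) ⊔ avg w f Set.univ

/-- The non-centered Hardy–Littlewood maximal operator of `X_τ`. -/
noncomputable def Mnc {τ : ℕ → ℕ} (w f : XPt τ → ℝ≥0∞) (x : XPt τ) : ℝ≥0∞ :=
  ⨆ (B : Set (XPt τ)) (_ : B ∈ balls τ) (_ : x ∈ B), avg w f B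

/-- `‖f‖_p^p = ∑_x f(x)^p μ({x})`. -/
noncomputable def lpp {τ : ℕ → ℕ} (w : XPt τ → ℝ≥0∞) (p : ℝ) (f : XPt τ → ℝ≥0∞) : ℝ≥0∞ :=
  ∑' x, f x ^ p * w x

/-- `T` is of strong type `(p,p)` (stated on the level of `p`-th powers). -/
def strongT {τ : ℕ → ℕ} (w : XPt τ → ℝ≥0∞)
    (T : (XPt τ → ℝ≥0∞) → XPt τ → ℝ≥0∞) (p : ℝ) : Prop :=
  ∃ C : ℝ≥0∞, C ≠ ∞ ∧ ∀ f, lpp w p (T f) ≤ C * lpp w p f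

/-- `T` is of weak type `(p,p)` (stated on the level of `p`-th powers). -/
def weakT {τ : ℕ → ℕ} (w : XPt τ → ℝ≥0∞)
    (T : (XPt τ → ℝ≥0∞) → XPt τ → ℝ≥0∞) (p : ℝ) : Prop :=
  ∃ C : ℝ≥0∞, C ≠ ∞ ∧ ∀ f (l : ℝ≥0∞), l ^ p * mass w {x | l < T f x} ≤ C * lpp w p f

/-- `‖g‖_{p,∞}^p`. -/
noncomputable def wnormP {τ : ℕ → ℕ} (w : XPt τ → ℝ≥0∞) (p : ℝ) (g : XPt τ → ℝ≥0∞) : ℝ≥0∞ :=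
  ⨆ l : ℝ≥0∞, l ^ p * mass w {x | l < g x}

/-- The Dirac function `δ_{x_n}`. -/
noncomputable def dirac (τ : ℕ → ℕ) (n : ℕ) : XPt τ → ℝ≥0∞ :=
  fun x => if x = root τ n then 1 else 0

end FirstGen

open FirstGen

namespace XhatAux
open MeasureTheory FirstGen

lemma holder_tsum {ι : Type*} [Countable ι] (f g : ι → ℝ≥0∞) {p q : ℝ}
    (hpq : p.HolderConjugate q) :
    ∑' i, f i * g i ≤ (∑' i, f i ^ p) ^ (1/p) * (∑' i, g i ^ q) ^ (1/q) := by
  letI : MeasurableSpace ι := ⊤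
  haveI : MeasurableSingletonClass ι := ⟨fun _ => MeasurableSpace.measurableSet_top⟩
  have h := ENNReal.lintegral_mul_le_Lp_mul_Lq (Measure.count (α := ι)) hpq
    (measurable_of_countable f).aemeasurable (measurable_of_countable g).aemeasurable
  simpa [lintegral_count] using h

lemma mul_div_le_self' (a b : ℝ≥0∞) : a * b / b ≤ a := by
  rw [mul_div_assoc]
  calc a * (b / b) ≤ a * 1 := by gcongr; exact ENNReal.div_self_le_one
    _ = a := mul_one a

lemma rpow_split {p q : ℝ} (hpq : p.HolderConjugate q) (x : ℝ≥0∞) :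
    x ^ (1/p) * x ^ (1/q) = x := by
  rcases eq_or_ne x 0 with rfl | hx0
  · rw [ENNReal.zero_rpow_of_pos hpq.one_div_pos, zero_mul]
  rcases eq_or_ne x ∞ with rfl | hxt
  · rw [ENNReal.top_rpow_of_pos hpq.one_div_pos, ENNReal.top_rpow_of_pos hpq.symm.one_div_pos,
      ENNReal.top_mul_top]
  · rw [← ENNReal.rpow_add _ _ hx0 hxt]
    rw [one_div, one_div, hpq.inv_add_inv_eq_one, ENNReal.rpow_one]

lemma jensen {ι : Type*} [Countable ι] (w f : ι → ℝ≥0∞) {p : ℝ} (hp : 1 ≤ p) :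
    ((∑' i, f i * w i) / ∑' i, w i) ^ p * ∑' i, w i ≤ ∑' i, f i ^ p * w i := by
  rcases eq_or_lt_of_le hp with h1 | h1
  · obtain rfl : p = 1 := h1.symm
    simp only [ENNReal.rpow_one, mul_comm]
    exact le_trans ENNReal.mul_div_le (le_of_eq (tsum_congr fun i => by rw [mul_comm]))
  set A := ∑' i, f i * w i with hA
  set m := ∑' i, w i with hm
  set B := ∑' i, f i ^ p * w i with hB
  rcases eq_or_ne m 0 with hm0 | hm0
  · simp [hm0]
  rcases eq_or_ne m ∞ with hmt | hmt
  · rw [hmt, ENNReal.div_top, ENNReal.zero_rpow_of_pos (lt_trans one_pos h1), zero_mul]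
    exact zero_le
  rcases eq_or_ne B ∞ with hBt | hBt
  · exact hBt ▸ le_top
  have hp0 : p ≠ 0 := by linarith
  have hq : p.HolderConjugate (p/(p-1)) := Real.HolderConjugate.conjExponent h1
  set q := p / (p-1) with hqdef
  have hAle : A ≤ B ^ (1/p) * m ^ (1/q) := by
    have h := holder_tsum (fun i => f i * w i ^ (1/p)) (fun i => w i ^ (1/q)) hq
    have e1 : ∀ i, (f i * w i ^ (1/p)) * w i ^ (1/q) = f i * w i := fun i => by
      rw [mul_assoc, rpow_split hq]
    have e2 : ∀ i, (f i * w i ^ (1/p)) ^ p = f i ^ p * w i := fun i => by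
      rw [ENNReal.mul_rpow_of_nonneg _ _ (by linarith : (0:ℝ) ≤ p), ← ENNReal.rpow_mul,
        one_div, inv_mul_cancel₀ hp0, ENNReal.rpow_one]
    have e3 : ∀ i, (w i ^ (1/q)) ^ q = w i := fun i => by
      rw [← ENNReal.rpow_mul, one_div, inv_mul_cancel₀ hq.symm.ne_zero, ENNReal.rpow_one]
    calc A = ∑' i, (f i * w i ^ (1/p)) * w i ^ (1/q) := (tsum_congr e1).symm
      _ ≤ (∑' i, (f i * w i ^ (1/p)) ^ p) ^ (1/p) * (∑' i, (w i ^ (1/q)) ^ q) ^ (1/q) := h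
      _ = B ^ (1/p) * m ^ (1/q) := by rw [tsum_congr e2, tsum_congr e3]
  have key : (1:ℝ)/q + (-1) = -(1/p) := by
    have := hq.inv_add_inv_eq_one
    rw [one_div, one_div]; linarith
  calc (A/m) ^ p * m ≤ ((B ^ (1/p) * m ^ (1/q)) / m) ^ p * m := by gcongr
    _ = (B ^ (1/p)) ^ p * (m ^ (1/q) / m) ^ p * m := by
        rw [mul_div_assoc, ENNReal.mul_rpow_of_nonneg _ _ (by linarith : (0:ℝ) ≤ p)]
    _ = B * (m ^ ((1:ℝ)/q + (-1))) ^ p * m := by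
        rw [← ENNReal.rpow_mul, one_div, inv_mul_cancel₀ hp0, ENNReal.rpow_one,
          div_eq_mul_inv, ← ENNReal.rpow_neg_one m, ← ENNReal.rpow_add _ _ hm0 hmt]
    _ = B * m⁻¹ * m := by
        rw [key, ← ENNReal.rpow_mul, neg_mul, one_div, inv_mul_cancel₀ hp0,
          ENNReal.rpow_neg_one]
    _ = B := by rw [mul_assoc, ENNReal.inv_mul_cancel hm0 hmt, mul_one]

lemma sup_rpow_le (a b : ℝ≥0∞) {p : ℝ} (hp : 0 ≤ p) : (a ⊔ b) ^ p ≤ a ^ p + b ^ p := by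
  rcases le_total a b with h | h
  · rw [sup_eq_right.2 h]; exact le_add_self
  · rw [sup_eq_left.2 h]; exact le_self_add

lemma add_rpow_le (a b : ℝ≥0∞) {p : ℝ} (hp : 0 ≤ p) :
    (a + b) ^ p ≤ 2 ^ p * (a ^ p + b ^ p) := by
  have h1 : a + b ≤ 2 * (a ⊔ b) := by
    rw [two_mul]; exact add_le_add le_sup_left le_sup_right
  calc (a+b)^p ≤ (2 * (a ⊔ b)) ^ p := ENNReal.rpow_le_rpow h1 hp
    _ = 2 ^ p * (a ⊔ b) ^ p := ENNReal.mul_rpow_of_nonneg _ _ hp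
    _ ≤ 2 ^ p * (a ^ p + b ^ p) := by gcongr; exact sup_rpow_le a b hp

lemma iSup_rpow_le {ι : Sort*} (g : ι → ℝ≥0∞) {p : ℝ} (hp : 0 < p) :
    (⨆ i, g i) ^ p ≤ ⨆ i, g i ^ p := by
  have h : ⨆ i, g i ≤ (⨆ i, g i ^ p) ^ (1/p) := by
    refine iSup_le fun i => ?_
    have hgi : g i = (g i ^ p) ^ (1/p) := by
      rw [← ENNReal.rpow_mul, mul_one_div, div_self hp.ne', ENNReal.rpow_one]
    rw [hgi]
    exact ENNReal.rpow_le_rpow (le_iSup (fun i => g i ^ p) i) (by positivity)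
  calc (⨆ i, g i) ^ p ≤ ((⨆ i, g i ^ p) ^ (1/p)) ^ p := ENNReal.rpow_le_rpow h hp.le
    _ = ⨆ i, g i ^ p := by
      rw [← ENNReal.rpow_mul, one_div, inv_mul_cancel₀ hp.ne', ENNReal.rpow_one]

lemma tsum_sumtype {α β : Type u} (g : α ⊕ β → ℝ≥0∞) :
    ∑' x, g x = ∑' a, g (.inl a) + ∑' b, g (.inr b) := by
  rw [← (Equiv.sumEquivSigmaBool α β).symm.tsum_eq, ENNReal.tsum_sigma', tsum_bool]; rfl

variable {τ : ℕ → ℕ}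

lemma root_ne_leaf {n : ℕ} {i : Fin (τ n)} : root τ n ≠ leaf τ n i := by
  simp [FirstGen.root, FirstGen.leaf]

lemma tsum_pairB (g : XPt τ → ℝ≥0∞) (n : ℕ) (i : Fin (τ n)) :
    ∑' x : (pairB τ n i : Set (XPt τ)), g x = g (root τ n) + g (leaf τ n i) := by
  have h : (pairB τ n i : Set (XPt τ))
      = (({root τ n, leaf τ n i} : Finset (XPt τ)) : Set (XPt τ)) := by
    simp [FirstGen.pairB]
  rw [h, Finset.tsum_subtype', Finset.sum_pair root_ne_leaf]

lemma leaf_injective (n : ℕ) : Function.Injective (leaf τ n) := by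
  intro i j hij
  simpa [FirstGen.leaf] using hij

lemma tsum_branch (g : XPt τ → ℝ≥0∞) (n : ℕ) :
    ∑' x : (branch τ n : Set (XPt τ)), g x = g (root τ n) + ∑ i, g (leaf τ n i) := by
  have h : (branch τ n : Set (XPt τ))
      = ((insert (root τ n) ((Finset.univ : Finset (Fin (τ n))).image (leaf τ n))
          : Finset (XPt τ)) : Set (XPt τ)) := by
    ext x
    simp [FirstGen.branch, eq_comm]
  rw [h, Finset.tsum_subtype',
    Finset.sum_insert (by simp [FirstGen.root, FirstGen.leaf]),
    Finset.sum_image (fun i _ j _ hij => leaf_injective n hij)]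

lemma tsum_xpt (g : XPt τ → ℝ≥0∞) :
    ∑' x, g x = ∑' n, g (root τ n) + ∑' n, ∑ i, g (leaf τ n i) := by
  rw [tsum_sumtype]
  congr 1
  rw [ENNReal.tsum_sigma' (fun σ : (Σ n, Fin (τ n)) => g (Sum.inr σ))]
  exact tsum_congr fun n => tsum_fintype _

/-- Bound function for the pair-ball part of the maximal function. -/
noncomputable def pairBnd (τ : ℕ → ℕ) (w f : XPt τ → ℝ≥0∞) : XPt τ → ℝ≥0∞
  | Sum.inl n => ⨆ i, avg w f (pairB τ n i)
  | Sum.inr ⟨n, i⟩ => avg w f (pairB τ n i)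

/-- Index of the branch containing a point. -/
def brIdx : XPt τ → ℕ := Sum.elim id Sigma.fst

@[simp] lemma pairBnd_root (w f : XPt τ → ℝ≥0∞) (n : ℕ) :
    pairBnd τ w f (root τ n) = ⨆ i, avg w f (pairB τ n i) := rfl

@[simp] lemma pairBnd_leaf (w f : XPt τ → ℝ≥0∞) (n : ℕ) (i : Fin (τ n)) :
    pairBnd τ w f (leaf τ n i) = avg w f (pairB τ n i) := rfl

@[simp] lemma brIdx_root (n : ℕ) : brIdx (root τ n) = n := rfl

@[simp] lemma brIdx_leaf (n : ℕ) (i : Fin (τ n)) : brIdx (leaf τ n i) = n := rfl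

end XhatAux

open XhatAux

/-- in the first generation space `X̂_{p₀}` (`p₀ ∈ [1,∞)`; branch `n`
here is the paper's branch `n+1`), the non-centered maximal operator is of strong
type `(p₀,p₀)` with `‖Mf‖_{p₀}^{p₀} ≤ (3 + 2^{p₀+1}) ‖f‖_{p₀}^{p₀}`. -/
theorem Xhat_noncen_strong (p0 : ℝ) (hp0 : 1 ≤ p0)
    (τ : ℕ → ℕ) (hτ : ∀ n : ℕ, τ n = ⌊((n : ℝ) + 2) ^ p0 / ((n : ℝ) + 1)⌋₊)
    (d : ℕ → ℝ≥0∞) (hd : ∀ n, 0 < d n ∧ d n ≠ ∞) (hd1 : d 0 = 1)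
    (F : (n : ℕ) → Fin (τ n) → ℝ≥0∞) (hF : ∀ n i, F n i = (n : ℝ≥0∞) + 1)
    (hhalf : ∀ n, mass (weight τ d F) (branch τ (n + 1))
      = mass (weight τ d F) (branch τ n) / 2) :
    ∀ f : XPt τ → ℝ≥0∞,
      lpp (weight τ d F) p0 (Mnc (weight τ d F) f)
        ≤ (3 + 2 ^ (p0 + 1)) * lpp (weight τ d F) p0 f := by
  intro f
  set w : XPt τ → ℝ≥0∞ := weight τ d F with hw
  have hp0' : (0:ℝ) < p0 := lt_of_lt_of_le one_pos hp0
  have hd0 : ∀ n, d n ≠ 0 := fun n => (hd n).1.ne'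
  have hdt : ∀ n, d n ≠ ∞ := fun n => (hd n).2
  have wroot : ∀ n, w (root τ n) = d n := fun n => rfl
  have wleaf : ∀ n i, w (leaf τ n i) = d n * ((n:ℝ≥0∞)+1) := by
    intro n i
    show d n * F n i = _
    rw [hF]
  have hbase0 : ∀ n : ℕ, ((n:ℝ≥0∞)+2) ^ p0 ≠ 0 := by
    intro n
    refine (ENNReal.rpow_pos ?_ ?_).ne'
    · exact lt_of_lt_of_le (by norm_num : (0:ℝ≥0∞) < 2) le_add_self
    · simp [ENNReal.add_ne_top]
  have hbt : ∀ n : ℕ, ((n:ℝ≥0∞)+2) ^ p0 ≠ ∞ := fun n =>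
    ENNReal.rpow_ne_top_of_nonneg hp0'.le (by simp [ENNReal.add_ne_top])
  have keyτ : ∀ n : ℕ, (τ n : ℝ≥0∞) * ((n:ℝ≥0∞)+1) ≤ ((n:ℝ≥0∞)+2) ^ p0 := by
    intro n
    have hreal : (τ n : ℝ) * ((n:ℝ)+1) ≤ ((n:ℝ)+2) ^ p0 := by
      have hfl : (τ n : ℝ) ≤ ((n:ℝ)+2)^p0 / ((n:ℝ)+1) := by
        rw [hτ n]
        exact Nat.floor_le (by positivity)
      calc (τ n : ℝ) * ((n:ℝ)+1) ≤ (((n:ℝ)+2)^p0 / ((n:ℝ)+1)) * ((n:ℝ)+1) :=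
            mul_le_mul_of_nonneg_right hfl (by positivity)
        _ = ((n:ℝ)+2)^p0 := div_mul_cancel₀ _ (by positivity)
    have e1 : (τ n : ℝ≥0∞) * ((n:ℝ≥0∞)+1) = ENNReal.ofReal ((τ n : ℝ) * ((n:ℝ)+1)) := by
      rw [ENNReal.ofReal_mul (by positivity), ENNReal.ofReal_natCast,
        ENNReal.ofReal_add (by positivity) zero_le_one, ENNReal.ofReal_natCast,
        ENNReal.ofReal_one]
    have e2 : ((n:ℝ≥0∞)+2) ^ p0 = ENNReal.ofReal (((n:ℝ)+2) ^ p0) := by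
      rw [← ENNReal.ofReal_rpow_of_pos (by positivity)]
      congr 1
      rw [ENNReal.ofReal_add (by positivity) (by norm_num), ENNReal.ofReal_natCast]
      norm_num
    rw [e1, e2]
    exact ENNReal.ofReal_le_ofReal hreal
  have mass_pair : ∀ n i, mass w (pairB τ n i) = d n * ((n:ℝ≥0∞)+2) := by
    intro n i
    rw [show mass w (pairB τ n i) = w (root τ n) + w (leaf τ n i) from tsum_pairB w n i,
      wroot, wleaf]
    ring
  have avg_pair_le₁ : ∀ n i, avg w f (pairB τ n i) ≤ f (root τ n) + f (leaf τ n i) := by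
    intro n i
    show (∑' x : (pairB τ n i : Set (XPt τ)), f x.1 * w x.1) / mass w (pairB τ n i) ≤ _
    rw [tsum_pairB (fun x => f x * w x) n i,
      show mass w (pairB τ n i) = w (root τ n) + w (leaf τ n i) from tsum_pairB w n i,
      ENNReal.add_div]
    exact add_le_add
      (le_trans (ENNReal.div_le_div le_rfl le_self_add) (mul_div_le_self' _ _))
      (le_trans (ENNReal.div_le_div le_rfl le_add_self) (mul_div_le_self' _ _))
  have avg_pair_le₂ : ∀ n i, avg w f (pairB τ n i)
      ≤ f (root τ n) / ((n:ℝ≥0∞)+2) + f (leaf τ n i) := by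
    intro n i
    show (∑' x : (pairB τ n i : Set (XPt τ)), f x.1 * w x.1) / mass w (pairB τ n i) ≤ _
    rw [tsum_pairB (fun x => f x * w x) n i, ENNReal.add_div]
    refine add_le_add (le_of_eq ?_) ?_
    · rw [mass_pair n i, wroot, mul_comm (f (root τ n)) (d n),
        ENNReal.mul_div_mul_left _ _ (hd0 n) (hdt n)]
    · refine le_trans (ENNReal.div_le_div le_rfl ?_) (mul_div_le_self' _ _)
      rw [show mass w (pairB τ n i) = w (root τ n) + w (leaf τ n i) from tsum_pairB w n i]
      exact le_add_self
  have jensen_set : ∀ s : Set (XPt τ),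
      avg w f s ^ p0 * mass w s ≤ ∑' x : s, f x.1 ^ p0 * w x.1 := fun s =>
    jensen (fun x : s => w x.1) (fun x : s => f x.1) hp0
  have hpt : ∀ x, Mnc w f x
      ≤ ((f x ⊔ pairBnd τ w f x) ⊔ avg w f (branch τ (brIdx x))) ⊔ avg w f univ := by
    intro x
    refine iSup_le fun B => iSup_le fun hB => iSup_le fun hx => ?_
    rcases hB with ⟨y, rfl⟩ | ⟨n, i, rfl⟩ | ⟨n, rfl⟩ | rfl
    · obtain rfl : x = y := hx
      refine le_sup_of_le_left (le_sup_of_le_left (le_sup_of_le_left ?_))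
      show (∑' z : ({x} : Set (XPt τ)), f z.1 * w z.1) / mass w {x} ≤ f x
      rw [tsum_singleton x (fun z => f z * w z),
        show mass w ({x} : Set (XPt τ)) = w x from tsum_singleton x w]
      exact mul_div_le_self' _ _
    · have hx' : x = root τ n ∨ x = leaf τ n i := hx
      rcases hx' with rfl | rfl
      · refine le_sup_of_le_left (le_sup_of_le_left (le_sup_of_le_right ?_))
        rw [pairBnd_root]
        exact le_iSup (fun j => avg w f (pairB τ n j)) i
      · refine le_sup_of_le_left (le_sup_of_le_left (le_sup_of_le_right ?_))
        rw [pairBnd_leaf]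
    · have hx' : x = root τ n ∨ ∃ i, x = leaf τ n i := hx
      have hb : avg w f (branch τ (brIdx x)) = avg w f (branch τ n) := by
        rcases hx' with rfl | ⟨i, rfl⟩ <;> rfl
      refine le_sup_of_le_left (le_sup_of_le_right ?_)
      rw [hb]
    · exact le_sup_of_le_right le_rfl
  set L := lpp w p0 f with hL
  have wnn : lpp w p0 (Mnc w f) ≤
      ∑' x, (f x ^ p0 * w x + pairBnd τ w f x ^ p0 * w x
        + avg w f (branch τ (brIdx x)) ^ p0 * w x + avg w f univ ^ p0 * w x) := by
    refine ENNReal.tsum_le_tsum fun x => ?_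
    have h1 : Mnc w f x ^ p0 ≤ f x ^ p0 + pairBnd τ w f x ^ p0
        + avg w f (branch τ (brIdx x)) ^ p0 + avg w f univ ^ p0 := by
      calc Mnc w f x ^ p0
          ≤ (((f x ⊔ pairBnd τ w f x) ⊔ avg w f (branch τ (brIdx x))) ⊔ avg w f univ) ^ p0 :=
            ENNReal.rpow_le_rpow (hpt x) hp0'.le
        _ ≤ ((f x ⊔ pairBnd τ w f x) ⊔ avg w f (branch τ (brIdx x))) ^ p0
            + avg w f univ ^ p0 := sup_rpow_le _ _ hp0'.le
        _ ≤ ((f x ⊔ pairBnd τ w f x) ^ p0 + avg w f (branch τ (brIdx x)) ^ p0)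
            + avg w f univ ^ p0 := by
            gcongr
            exact sup_rpow_le _ _ hp0'.le
        _ ≤ ((f x ^ p0 + pairBnd τ w f x ^ p0) + avg w f (branch τ (brIdx x)) ^ p0)
            + avg w f univ ^ p0 := by
            gcongr
            exact sup_rpow_le _ _ hp0'.le
    calc Mnc w f x ^ p0 * w x
        ≤ (f x ^ p0 + pairBnd τ w f x ^ p0 + avg w f (branch τ (brIdx x)) ^ p0
            + avg w f univ ^ p0) * w x := mul_le_mul_left h1 _
      _ = f x ^ p0 * w x + pairBnd τ w f x ^ p0 * w x
          + avg w f (branch τ (brIdx x)) ^ p0 * w x + avg w f univ ^ p0 * w x := by ring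
  have hsplit : (∑' x, (f x ^ p0 * w x + pairBnd τ w f x ^ p0 * w x
      + avg w f (branch τ (brIdx x)) ^ p0 * w x + avg w f univ ^ p0 * w x))
      = L + (∑' x, pairBnd τ w f x ^ p0 * w x)
        + (∑' x, avg w f (branch τ (brIdx x)) ^ p0 * w x)
        + (∑' x, avg w f univ ^ p0 * w x) := by
    rw [ENNReal.tsum_add, ENNReal.tsum_add, ENNReal.tsum_add]
    rfl
  have hT4 : (∑' x : XPt τ, avg w f univ ^ p0 * w x) ≤ L := by
    rw [ENNReal.tsum_mul_left]
    have h1 : avg w f (univ : Set (XPt τ))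
        = (∑' x : XPt τ, f x * w x) / (∑' x : XPt τ, w x) := by
      show (∑' x : (univ : Set (XPt τ)), f x.1 * w x.1) / mass w univ = _
      rw [tsum_univ (fun x => f x * w x),
        show mass w (univ : Set (XPt τ)) = ∑' x, w x from tsum_univ w]
    rw [h1]
    exact jensen w f hp0
  have hbranch : ∀ n, avg w f (branch τ n) ^ p0 * w (root τ n)
      + ∑ i, avg w f (branch τ n) ^ p0 * w (leaf τ n i)
      ≤ f (root τ n) ^ p0 * w (root τ n) + ∑ i, f (leaf τ n i) ^ p0 * w (leaf τ n i) := by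
    intro n
    have hmass : w (root τ n) + ∑ i, w (leaf τ n i) = mass w (branch τ n) :=
      (tsum_branch w n).symm
    calc avg w f (branch τ n) ^ p0 * w (root τ n)
          + ∑ i, avg w f (branch τ n) ^ p0 * w (leaf τ n i)
        = avg w f (branch τ n) ^ p0 * (w (root τ n) + ∑ i, w (leaf τ n i)) := by
          rw [mul_add, Finset.mul_sum]
      _ = avg w f (branch τ n) ^ p0 * mass w (branch τ n) := by rw [hmass]
      _ ≤ ∑' x : (branch τ n : Set (XPt τ)), f x.1 ^ p0 * w x.1 := jensen_set _
      _ = _ := tsum_branch (fun x => f x ^ p0 * w x) n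
  have hT3 : (∑' x, avg w f (branch τ (brIdx x)) ^ p0 * w x) ≤ L := by
    calc (∑' x, avg w f (branch τ (brIdx x)) ^ p0 * w x)
        = ∑' n, (avg w f (branch τ n) ^ p0 * w (root τ n)
            + ∑ i, avg w f (branch τ n) ^ p0 * w (leaf τ n i)) := by
          rw [tsum_xpt (fun x => avg w f (branch τ (brIdx x)) ^ p0 * w x), ← ENNReal.tsum_add]
          exact tsum_congr fun n => by simp only [brIdx_root, brIdx_leaf]
      _ ≤ ∑' n, (f (root τ n) ^ p0 * w (root τ n)
            + ∑ i, f (leaf τ n i) ^ p0 * w (leaf τ n i)) := ENNReal.tsum_le_tsum hbranch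
      _ = L := by
          rw [ENNReal.tsum_add]
          exact (tsum_xpt (fun x => f x ^ p0 * w x)).symm
  have hrootn : ∀ n, (⨆ i, avg w f (pairB τ n i)) ^ p0 * w (root τ n)
      ≤ 2 ^ p0 * (f (root τ n) ^ p0 * w (root τ n))
        + 2 ^ p0 * ∑ i, f (leaf τ n i) ^ p0 * w (leaf τ n i) := by
    intro n
    have h0 : ∀ i, avg w f (pairB τ n i) ^ p0 * w (root τ n)
        ≤ 2 ^ p0 * (f (root τ n) ^ p0 * w (root τ n))
          + 2 ^ p0 * ∑ i, f (leaf τ n i) ^ p0 * w (leaf τ n i) := by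
      intro i
      calc avg w f (pairB τ n i) ^ p0 * w (root τ n)
          ≤ (f (root τ n) + f (leaf τ n i)) ^ p0 * w (root τ n) :=
            mul_le_mul_left (ENNReal.rpow_le_rpow (avg_pair_le₁ n i) hp0'.le) _
        _ ≤ (2 ^ p0 * (f (root τ n) ^ p0 + f (leaf τ n i) ^ p0)) * w (root τ n) :=
            mul_le_mul_left (add_rpow_le _ _ hp0'.le) _
        _ = 2 ^ p0 * (f (root τ n) ^ p0 * w (root τ n))
            + 2 ^ p0 * (f (leaf τ n i) ^ p0 * w (root τ n)) := by ring
        _ ≤ 2 ^ p0 * (f (root τ n) ^ p0 * w (root τ n))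
            + 2 ^ p0 * (f (leaf τ n i) ^ p0 * w (leaf τ n i)) := by
            gcongr
            rw [wroot, wleaf]
            exact le_mul_of_one_le_right' (by simp)
        _ ≤ 2 ^ p0 * (f (root τ n) ^ p0 * w (root τ n))
            + 2 ^ p0 * ∑ i', f (leaf τ n i') ^ p0 * w (leaf τ n i') := by
            gcongr
            exact Finset.single_le_sum
              (f := fun j => f (leaf τ n j) ^ p0 * w (leaf τ n j))
              (fun j _ => zero_le) (Finset.mem_univ i)
    calc (⨆ i, avg w f (pairB τ n i)) ^ p0 * w (root τ n)
        ≤ (⨆ i, avg w f (pairB τ n i) ^ p0) * w (root τ n) :=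
          mul_le_mul_left (iSup_rpow_le _ hp0') _
      _ = ⨆ i, avg w f (pairB τ n i) ^ p0 * w (root τ n) := ENNReal.iSup_mul _ _
      _ ≤ _ := iSup_le h0
  have hleafn : ∀ n, (∑ i, avg w f (pairB τ n i) ^ p0 * w (leaf τ n i))
      ≤ 2 ^ p0 * (f (root τ n) ^ p0 * w (root τ n))
        + 2 ^ p0 * ∑ i, f (leaf τ n i) ^ p0 * w (leaf τ n i) := by
    intro n
    set c : ℝ≥0∞ := (((n:ℝ≥0∞)+2) ^ p0)⁻¹ with hc
    have hc1 : c * ((τ n : ℝ≥0∞) * ((n:ℝ≥0∞)+1)) ≤ 1 := by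
      calc c * ((τ n : ℝ≥0∞) * ((n:ℝ≥0∞)+1)) ≤ c * (((n:ℝ≥0∞)+2) ^ p0) :=
            mul_le_mul_right (keyτ n) c
        _ = 1 := ENNReal.inv_mul_cancel (hbase0 n) (hbt n)
    have h0 : ∀ i, avg w f (pairB τ n i) ^ p0 * w (leaf τ n i)
        ≤ (2 ^ p0 * (f (root τ n) ^ p0 * c)) * w (leaf τ n i)
          + 2 ^ p0 * (f (leaf τ n i) ^ p0 * w (leaf τ n i)) := by
      intro i
      have hdiv : (f (root τ n) / ((n:ℝ≥0∞)+2)) ^ p0 = f (root τ n) ^ p0 * c := by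
        rw [ENNReal.div_rpow_of_nonneg _ _ hp0'.le, div_eq_mul_inv]
      calc avg w f (pairB τ n i) ^ p0 * w (leaf τ n i)
          ≤ (f (root τ n) / ((n:ℝ≥0∞)+2) + f (leaf τ n i)) ^ p0 * w (leaf τ n i) :=
            mul_le_mul_left (ENNReal.rpow_le_rpow (avg_pair_le₂ n i) hp0'.le) _
        _ ≤ (2 ^ p0 * ((f (root τ n) / ((n:ℝ≥0∞)+2)) ^ p0 + f (leaf τ n i) ^ p0))
            * w (leaf τ n i) := mul_le_mul_left (add_rpow_le _ _ hp0'.le) _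
        _ = (2 ^ p0 * (f (root τ n) ^ p0 * c)) * w (leaf τ n i)
            + 2 ^ p0 * (f (leaf τ n i) ^ p0 * w (leaf τ n i)) := by rw [hdiv]; ring
    have hsumw : (∑ i : Fin (τ n), w (leaf τ n i))
        = (τ n : ℝ≥0∞) * (d n * ((n:ℝ≥0∞)+1)) := by
      simp only [wleaf]
      rw [Finset.sum_const, Finset.card_univ, Fintype.card_fin, nsmul_eq_mul]
    have hkey2 : (2 ^ p0 * (f (root τ n) ^ p0 * c)) * ((τ n : ℝ≥0∞) * (d n * ((n:ℝ≥0∞)+1)))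
        ≤ 2 ^ p0 * (f (root τ n) ^ p0 * w (root τ n)) := by
      rw [wroot]
      calc (2 ^ p0 * (f (root τ n) ^ p0 * c)) * ((τ n : ℝ≥0∞) * (d n * ((n:ℝ≥0∞)+1)))
          = (2 ^ p0 * (f (root τ n) ^ p0 * d n)) * (c * ((τ n : ℝ≥0∞) * ((n:ℝ≥0∞)+1))) := by
            ring
        _ ≤ (2 ^ p0 * (f (root τ n) ^ p0 * d n)) * 1 := mul_le_mul_right hc1 _
        _ = 2 ^ p0 * (f (root τ n) ^ p0 * d n) := mul_one _
    calc (∑ i, avg w f (pairB τ n i) ^ p0 * w (leaf τ n i))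
        ≤ ∑ i, ((2 ^ p0 * (f (root τ n) ^ p0 * c)) * w (leaf τ n i)
            + 2 ^ p0 * (f (leaf τ n i) ^ p0 * w (leaf τ n i))) :=
          Finset.sum_le_sum fun i _ => h0 i
      _ = (2 ^ p0 * (f (root τ n) ^ p0 * c)) * (∑ i, w (leaf τ n i))
          + 2 ^ p0 * ∑ i, f (leaf τ n i) ^ p0 * w (leaf τ n i) := by
          rw [Finset.sum_add_distrib, ← Finset.mul_sum, ← Finset.mul_sum]
      _ ≤ 2 ^ p0 * (f (root τ n) ^ p0 * w (root τ n))
          + 2 ^ p0 * ∑ i, f (leaf τ n i) ^ p0 * w (leaf τ n i) := by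
          rw [hsumw]
          exact add_le_add hkey2 le_rfl
  have hT2 : (∑' x, pairBnd τ w f x ^ p0 * w x) ≤ 2 ^ (p0+1) * L := by
    have hhalfL : ∑' n, (2 ^ p0 * (f (root τ n) ^ p0 * w (root τ n))
        + 2 ^ p0 * ∑ i, f (leaf τ n i) ^ p0 * w (leaf τ n i)) = 2 ^ p0 * L := by
      calc ∑' n, (2 ^ p0 * (f (root τ n) ^ p0 * w (root τ n))
            + 2 ^ p0 * ∑ i, f (leaf τ n i) ^ p0 * w (leaf τ n i))
          = ∑' n, 2 ^ p0 * (f (root τ n) ^ p0 * w (root τ n)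
              + ∑ i, f (leaf τ n i) ^ p0 * w (leaf τ n i)) := tsum_congr fun n => by ring
        _ = 2 ^ p0 * ∑' n, (f (root τ n) ^ p0 * w (root τ n)
              + ∑ i, f (leaf τ n i) ^ p0 * w (leaf τ n i)) := ENNReal.tsum_mul_left
        _ = 2 ^ p0 * L := by
            congr 1
            rw [ENNReal.tsum_add]
            exact (tsum_xpt (fun x => f x ^ p0 * w x)).symm
    calc (∑' x, pairBnd τ w f x ^ p0 * w x)
        = ∑' n, (⨆ i, avg w f (pairB τ n i)) ^ p0 * w (root τ n)
          + ∑' n, ∑ i, avg w f (pairB τ n i) ^ p0 * w (leaf τ n i) := by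
          rw [tsum_xpt (fun x => pairBnd τ w f x ^ p0 * w x)]
          simp only [pairBnd_root, pairBnd_leaf]
      _ ≤ (∑' n, (2 ^ p0 * (f (root τ n) ^ p0 * w (root τ n))
            + 2 ^ p0 * ∑ i, f (leaf τ n i) ^ p0 * w (leaf τ n i)))
          + ∑' n, (2 ^ p0 * (f (root τ n) ^ p0 * w (root τ n))
            + 2 ^ p0 * ∑ i, f (leaf τ n i) ^ p0 * w (leaf τ n i)) :=
          add_le_add (ENNReal.tsum_le_tsum hrootn) (ENNReal.tsum_le_tsum hleafn)
      _ = 2 ^ p0 * L + 2 ^ p0 * L := by rw [hhalfL]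
      _ = 2 ^ (p0+1) * L := by
          rw [ENNReal.rpow_add p0 1 two_ne_zero ENNReal.ofNat_ne_top, ENNReal.rpow_one]
          ring
  calc lpp w p0 (Mnc w f)
      ≤ ∑' x, (f x ^ p0 * w x + pairBnd τ w f x ^ p0 * w x
        + avg w f (branch τ (brIdx x)) ^ p0 * w x + avg w f univ ^ p0 * w x) := wnn
    _ = L + (∑' x, pairBnd τ w f x ^ p0 * w x)
        + (∑' x, avg w f (branch τ (brIdx x)) ^ p0 * w x)
        + (∑' x, avg w f univ ^ p0 * w x) := hsplit
    _ ≤ L + 2 ^ (p0+1) * L + L + L :=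
        add_le_add (add_le_add (add_le_add le_rfl hT2) hT3) hT4
    _ = (3 + 2 ^ (p0 + 1)) * L := by ring
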